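/- arXiv:1903.04712 — 3 statements merged into one kernel-verified Lean document; each statement's English description precedes it below -/
import Mathlib

section
/- Generalized Weitzenböck identity (algebraic form of Theorem 1). Let R be a commutative ring, M an R-module, D : M →ₗ[R] M a linear endomorphism, ι a finite index type, I : ι → (M →ₗ[R] M) a family of endomorphisms, and η : ι → ι → R a symmetric matrix (η a b = η b a). Define the raised family I' a := Σ_b (η a b) • (I b), the generalized Lie derivatives 𝔇 a := (I a) ∘ D + D ∘ (I a) and 𝔇' a := (I' a) ∘ D + D ∘ (I' a), and the generalized coderivative D‡ := − Σ_a (I a) ∘ D ∘ (I' a). If Σ_a (I a) ∘ (I' a) = 0, then D‡ ∘ D + D ∘ D‡ = − Σ_a (𝔇 a) ∘ (𝔇' a) + Σ_a (I a) ∘ D ∘ D ∘ (I' a). -/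
/-- Generalized Weitzenböck identity (algebraic form of Theorem 1).
With `I' a = Σ_b (η a b) • I b`, `𝔇 a = I a ∘ D + D ∘ I a`,
`𝔇' a = I' a ∘ D + D ∘ I' a`, and `Ddag = − Σ_a I a ∘ D ∘ I' a`,
if `Σ_a I a ∘ I' a = 0` then
`Ddag ∘ D + D ∘ Ddag = − Σ_a 𝔇 a ∘ 𝔇' a + Σ_a I a ∘ D ∘ D ∘ I' a`. -/
theorem generalized_weitzenboeck
    {R M : Type*} [CommRing R] [AddCommGroup M] [Module R M]
    {ι : Type*} [Fintype ι]
    (D : M →ₗ[R] M) (I : ι → M →ₗ[R] M) (η : ι → ι → R)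
    (hη : ∀ a b, η a b = η b a)
    (I' 𝔇 𝔇' : ι → M →ₗ[R] M) (Ddag : M →ₗ[R] M)
    (hI' : ∀ a, I' a = ∑ b, η a b • I b)
    (h𝔇 : ∀ a, 𝔇 a = I a ∘ₗ D + D ∘ₗ I a)
    (h𝔇' : ∀ a, 𝔇' a = I' a ∘ₗ D + D ∘ₗ I' a)
    (hDdag : Ddag = -∑ a, I a ∘ₗ D ∘ₗ I' a)
    (hzero : ∑ a, I a ∘ₗ I' a = 0) :
    Ddag ∘ₗ D + D ∘ₗ Ddag =
      -∑ a, 𝔇 a ∘ₗ 𝔇' a + ∑ a, I a ∘ₗ D ∘ₗ D ∘ₗ I' a := by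
  simp only [h𝔇, h𝔇', hDdag, ← Module.End.mul_eq_comp] at *
  have expand : ∀ a ∈ (Finset.univ : Finset ι),
      (I a * D + D * I a) * (I' a * D + D * I' a)
      = I a * (D * I' a) * D + I a * (D * (D * I' a))
        + D * (I a * I' a) * D + D * (I a * (D * I' a)) := by
    intro a _; noncomm_ring
  rw [Finset.sum_congr rfl expand]
  simp only [Finset.sum_add_distrib, ← Finset.sum_mul, ← Finset.mul_sum, hzero]
  noncomm_ring
end

section
/- Let R be a commutative ring, M an R-module, and A, B, D : M →ₗ[R] M linear endomorphisms with A ∘ B + B ∘ A = 0. Define 𝒟_A := A ∘ D + D ∘ A and 𝒟_B := B ∘ D + D ∘ B. Then 𝒟_A ∘ 𝒟_B − 𝒟_B ∘ 𝒟_A = B ∘ A ∘ D ∘ D + D ∘ D ∘ B ∘ A + A ∘ D ∘ D ∘ B − B ∘ D ∘ D ∘ A + D ∘ (A ∘ 𝒟_B − 𝒟_B ∘ A) + (A ∘ 𝒟_B − 𝒟_B ∘ A) ∘ D. -/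
/-- Algebraic core of the commutator formula for two generalized Lie
derivatives `𝒟_A = A ∘ D + D ∘ A`, `𝒟_B = B ∘ D + D ∘ B`, assuming
`A ∘ B + B ∘ A = 0`. -/
theorem lie_commutator
    {R M : Type*} [CommRing R] [AddCommGroup M] [Module R M]
    (A B D : M →ₗ[R] M) (hAB : A ∘ₗ B + B ∘ₗ A = 0) :
    (A ∘ₗ D + D ∘ₗ A) ∘ₗ (B ∘ₗ D + D ∘ₗ B) -
      (B ∘ₗ D + D ∘ₗ B) ∘ₗ (A ∘ₗ D + D ∘ₗ A) =
    B ∘ₗ A ∘ₗ D ∘ₗ D + D ∘ₗ D ∘ₗ B ∘ₗ A +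
      A ∘ₗ D ∘ₗ D ∘ₗ B - B ∘ₗ D ∘ₗ D ∘ₗ A +
      D ∘ₗ (A ∘ₗ (B ∘ₗ D + D ∘ₗ B) - (B ∘ₗ D + D ∘ₗ B) ∘ₗ A) +
      (A ∘ₗ (B ∘ₗ D + D ∘ₗ B) - (B ∘ₗ D + D ∘ₗ B) ∘ₗ A) ∘ₗ D := by
  simp only [← Module.End.mul_eq_comp] at hAB ⊢
  have h : A * B = -(B * A) := eq_neg_of_add_eq_zero_left hAB
  simp only [mul_add, add_mul, mul_sub, sub_mul, mul_assoc]
  rw [show A * (B * (D * D)) = -(B * (A * (D * D))) by rw [← mul_assoc, h]; noncomm_ring]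
  abel
end

section
/- Operator inversion formula (abstract form of Lemma 2). Let R be a commutative ring, M an R-module, ι a finite index type, ε, I : ι → (M →ₗ[R] M) two families of endomorphisms, and D : M →ₗ[R] M. Define N := Σ_a (ε a) ∘ (I a), the generalized Lie derivatives 𝔇 a := (I a) ∘ D + D ∘ (I a), and τ a := D ∘ (ε a) + (ε a) ∘ D. If N ∘ D − D ∘ N = D, then D = Σ_a (ε a) ∘ (𝔇 a) − Σ_a (τ a) ∘ (I a). -/
/-- Operator inversion formula (abstract form of Lemma 2): with
`N = Σ_a ε a ∘ I a`, `𝔇 a = I a ∘ D + D ∘ I a`, `τ a = D ∘ ε a + ε a ∘ D`,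
if `N ∘ D − D ∘ N = D` then `D = Σ_a ε a ∘ 𝔇 a − Σ_a τ a ∘ I a`. -/
theorem operator_inversion
    {R M : Type*} [CommRing R] [AddCommGroup M] [Module R M]
    {ι : Type*} [Fintype ι]
    (ε I : ι → M →ₗ[R] M) (D : M →ₗ[R] M)
    (N : M →ₗ[R] M) (𝔇 τ : ι → M →ₗ[R] M)
    (hN : N = ∑ a, ε a ∘ₗ I a)
    (h𝔇 : ∀ a, 𝔇 a = I a ∘ₗ D + D ∘ₗ I a)
    (hτ : ∀ a, τ a = D ∘ₗ ε a + ε a ∘ₗ D)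
    (hcomm : N ∘ₗ D - D ∘ₗ N = D) :
    D = ∑ a, ε a ∘ₗ 𝔇 a - ∑ a, τ a ∘ₗ I a := by
  ext x
  have h := LinearMap.congr_fun hcomm x
  simp only [hN, h𝔇, hτ, LinearMap.sub_apply, LinearMap.add_apply, LinearMap.comp_apply,
    LinearMap.sum_apply, map_sum, Finset.sum_add_distrib] at h ⊢
  simp only [map_add, Finset.sum_add_distrib]
  conv_lhs => rw [← h]
  abel
end
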